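/- Let θ ∈ (0, 2π) with θ ≠ π, and suppose that the Robin function is invariant under the rotation of angle θ around x₀, i.e. γ̃(x₀ + e^{iθ}·(x − x₀)) = γ̃(x) for all x in a neighborhood of x₀ on which both sides are defined. Then T''(x₀) = 0 and T'''(x₀) = 0. -/

import Mathlib

open Complex Filter Set Topology

lemma analytic_hasStrictDerivAt {f : ℂ → ℂ} {x : ℂ} (h : AnalyticAt ℂ f x) :
    HasStrictDerivAt f (deriv f x) x := by
  obtain ⟨p, hp⟩ := h
  simpa [hp.deriv] using hp.hasStrictDerivAt

/-- An injective holomorphic function on an open set has nonvanishing derivative. -/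
lemma deriv_ne_zero_of_injOn {f : ℂ → ℂ} {s : Set ℂ} (hs : IsOpen s) {x : ℂ} (hx : x ∈ s)
    (hf : DifferentiableOn ℂ f s) (hinj : Set.InjOn f s) : deriv f x ≠ 0 := by
  intro hdf
  have hA : AnalyticOnNhd ℂ f s := hf.analyticOnNhd hs
  set g : ℂ → ℂ := fun z => f z - f x with hgdef
  have hg : AnalyticAt ℂ g x := (hA x hx).sub analyticAt_const
  have hgx : g x = 0 := by simp [hgdef]
  have hdg : deriv g x = 0 := by
    rw [hgdef]; rw [deriv_sub_const]; exact hdf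
  have hsmem : ∀ᶠ z in 𝓝 x, z ∈ s := hs.mem_nhds hx
  have hmemp : ∀ᶠ z in 𝓝[≠] x, z ∈ s ∧ z ≠ x := by
    filter_upwards [hsmem.filter_mono nhdsWithin_le_nhds, eventually_mem_nhdsWithin] with z h1 h2
    exact ⟨h1, h2⟩
  -- order of g is finite
  have hnotev : ¬ (∀ᶠ z in 𝓝 x, g z = 0) := by
    intro hev
    obtain ⟨z, hz0, hzs, hzne⟩ :=
      ((hev.filter_mono nhdsWithin_le_nhds).and hmemp).exists
    exact hzne (hinj hzs hx (by simpa [hgdef, sub_eq_zero] using hz0))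
  have horder : analyticOrderAt g x ≠ ⊤ := fun h => hnotev (analyticOrderAt_eq_top.mp h)
  obtain ⟨n, hn⟩ : ∃ n : ℕ, analyticOrderAt g x = n := by
    lift analyticOrderAt g x to ℕ using horder with n hn
    exact ⟨n, rfl⟩
  obtain ⟨h, hha, hhx, hhev⟩ := (hg.analyticOrderAt_eq_natCast).mp hn
  -- n ≥ 2
  have hn0 : n ≠ 0 := by
    rintro rfl
    have := hhev.self_of_nhds
    simp [hgx] at this
    exact hhx this.symm
  have hn1 : n ≠ 1 := by
    rintro rfl
    have hder : HasDerivAt (fun z => (z - x) ^ 1 • h z) (h x) x := by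
      have h1 : HasDerivAt (fun z : ℂ => (z - x)) 1 x := (hasDerivAt_id x).sub_const x
      have h2 : HasDerivAt h (deriv h x) x := hha.differentiableAt.hasDerivAt
      have := (h1.mul h2)
      simp only [pow_one, smul_eq_mul]
      simpa [hgx, sub_self, Pi.mul_def] using this
    have : deriv g x = h x := by
      rw [Filter.EventuallyEq.deriv_eq hhev]
      exact hder.deriv
    exact hhx (by rw [← this, hdg])
  have hn2 : 2 ≤ n := by omega
  -- n-th root of h near x
  set c : ℂ := Complex.exp (Complex.log (h x) / n) with hc
  have hcn : c ^ n = h x := by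
    rw [hc, ← Complex.exp_nat_mul]
    rw [mul_div_cancel₀ _ (by exact_mod_cast (by omega : n ≠ 0))]
    exact Complex.exp_log hhx
  have hc0 : c ≠ 0 := Complex.exp_ne_zero _
  set φ : ℂ → ℂ := fun z => (z - x) * (c * Complex.exp (Complex.log (h z / h x) / n)) with hφ
  have hφx : φ x = 0 := by simp [hφ]
  have hhne : ∀ᶠ z in 𝓝 x, h z ≠ 0 := by
    have : ContinuousAt h x := hha.continuousAt
    exact this.eventually_ne hhx
  have hNc : (n:ℂ) ≠ 0 := by exact_mod_cast (by omega : n ≠ 0)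
  have hφn : ∀ᶠ z in 𝓝 x, φ z ^ n = g z := by
    filter_upwards [hhne, hhev] with z hz hgz
    have e1 : Complex.exp (Complex.log (h z / h x) / n) ^ n = h z / h x := by
      rw [← Complex.exp_nat_mul, mul_div_cancel₀ _ hNc, Complex.exp_log (div_ne_zero hz hhx)]
    rw [hφ, mul_pow, mul_pow, e1, hcn, hgz, smul_eq_mul]
    field_simp
  -- φ is analytic with nonzero derivative c at x
  have hdiva : AnalyticAt ℂ (fun z => h z / h x) x := hha.div analyticAt_const hhx
  have hloga : AnalyticAt ℂ (fun z => Complex.log (h z / h x)) x := by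
    apply hdiva.clog
    rw [div_self hhx]
    exact Complex.one_mem_slitPlane
  have hexpa : AnalyticAt ℂ (fun z => c * Complex.exp (Complex.log (h z / h x) / (n:ℂ))) x :=
    analyticAt_const.mul ((hloga.div analyticAt_const hNc).cexp)
  have hφa : AnalyticAt ℂ φ x :=
    ((analyticAt_id.sub analyticAt_const)).mul hexpa
  have hφd : HasDerivAt φ c x := by
    have h1 : HasDerivAt (fun z : ℂ => (z - x)) 1 x := (hasDerivAt_id x).sub_const x
    have := h1.mul hexpa.differentiableAt.hasDerivAt
    simpa [div_self hhx, hφ, Pi.mul_def] using this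
  have hφs : HasStrictDerivAt φ c x := by
    have := analytic_hasStrictDerivAt hφa
    rwa [hφd.deriv] at this
  -- local inverse ψ of φ near x
  set ψ : ℂ → ℂ := HasStrictDerivAt.localInverse φ c x hφs hc0 with hψ
  have hev_r : ∀ᶠ y in 𝓝 (φ x), φ (ψ y) = y :=
    (hφs.hasStrictFDerivAt_equiv hc0).eventually_right_inverse
  have hψc : ContinuousAt ψ (φ x) :=
    (hφs.hasStrictFDerivAt_equiv hc0).localInverse_continuousAt
  have hψx : ψ (φ x) = x :=
    (hφs.hasStrictFDerivAt_equiv hc0).localInverse_apply_image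
  rw [hφx] at hev_r hψc hψx
  -- the rotation ζ
  set ζ : ℂ := Complex.exp (2 * Real.pi * Complex.I / n) with hζ
  have hζn : ζ ^ n = 1 := by
    rw [hζ, ← Complex.exp_nat_mul, mul_div_cancel₀ _ hNc, Complex.exp_two_pi_mul_I]
  have hζ1 : ζ ≠ 1 := by
    intro hone
    obtain ⟨m, hm⟩ := Complex.exp_eq_one_iff.mp (hζ ▸ hone)
    have h2pi : (2 * Real.pi * Complex.I : ℂ) ≠ 0 := by
      simp [Complex.I_ne_zero, Real.pi_ne_zero, Complex.ofReal_ne_zero]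
    have hmn : ((m * n : ℤ) : ℂ) = 1 := by
      have : 2 * (Real.pi:ℂ) * Complex.I = m * (2 * Real.pi * Complex.I) * n := by
        field_simp at hm ⊢
        linear_combination hm
      have key : (2 * (Real.pi:ℂ) * Complex.I) * 1 = (2 * (Real.pi:ℂ) * Complex.I) * ((m:ℂ) * (n:ℂ)) := by
        linear_combination this
      have h2 : (m : ℂ) * n = 1 := (mul_left_cancel₀ h2pi key).symm
      push_cast
      exact h2
    have hmn' : (m * n : ℤ) = 1 := by exact_mod_cast hmn
    have : (n : ℤ) ≤ 1 := Int.le_of_dvd one_pos ⟨m, by linarith [hmn']⟩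
    omega
  -- pick a small nonzero y
  have tζ : Filter.Tendsto (fun y : ℂ => ζ * y) (𝓝 0) (𝓝 0) := by
    simpa [hζ, Pi.mul_def] using (continuous_const.mul continuous_id : Continuous fun y : ℂ => ζ * y).tendsto 0
  have tψ : Filter.Tendsto ψ (𝓝 0) (𝓝 x) := by
    simpa [hψx] using hψc.tendsto
  have W : ∀ᶠ z in 𝓝 x, φ z ^ n = g z ∧ z ∈ s := hφn.and hsmem
  have Eall : ∀ᶠ y in 𝓝 (0:ℂ), φ (ψ y) = y ∧ φ (ψ (ζ * y)) = ζ * y ∧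
      (φ (ψ y) ^ n = g (ψ y) ∧ ψ y ∈ s) ∧ (φ (ψ (ζ * y)) ^ n = g (ψ (ζ * y)) ∧ ψ (ζ * y) ∈ s) := by
    filter_upwards [hev_r, tζ.eventually hev_r, tψ.eventually W, tζ.eventually (tψ.eventually W)]
      with y h1 h2 h3 h4
    exact ⟨h1, h2, h3, h4⟩
  have Eall' : ∀ᶠ y in 𝓝[≠] (0:ℂ), (φ (ψ y) = y ∧ φ (ψ (ζ * y)) = ζ * y ∧
      (φ (ψ y) ^ n = g (ψ y) ∧ ψ y ∈ s) ∧ (φ (ψ (ζ * y)) ^ n = g (ψ (ζ * y)) ∧ ψ (ζ * y) ∈ s))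
      ∧ y ≠ 0 := by
    filter_upwards [eventually_nhdsWithin_of_eventually_nhds Eall,
      eventually_mem_nhdsWithin] with y h1 h2
    exact ⟨h1, h2⟩
  obtain ⟨y, hy, hyne⟩ := Eall'.exists
  obtain ⟨h1, h2, ⟨h3, h3s⟩, ⟨h4, h4s⟩⟩ := hy
  have hyne0 : y ≠ 0 := hyne
  have hgz1 : g (ψ y) = y ^ n := by rw [← h3, h1]
  have hgz2 : g (ψ (ζ * y)) = y ^ n := by rw [← h4, h2, mul_pow, hζn, one_mul]
  have hfz : f (ψ y) = f (ψ (ζ * y)) := by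
    have : g (ψ y) = g (ψ (ζ * y)) := by rw [hgz1, hgz2]
    simpa [hgdef, sub_left_inj] using this
  have heq : ψ y = ψ (ζ * y) := hinj h3s h4s hfz
  have : y = ζ * y := by
    calc y = φ (ψ y) := h1.symm
    _ = φ (ψ (ζ * y)) := by rw [heq]
    _ = ζ * y := h2
  have : (ζ - 1) * y = 0 := by linear_combination -this
  rcases mul_eq_zero.mp this with hh | hh
  · exact hζ1 (by linear_combination hh)
  · exact hyne0 hh

/-- The Robin function `γ̃(x) = -(1/(2π))·log(1 - |T(x)|²) + (1/(2π))·log|T'(x)|`. -/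
noncomputable def robin (T : ℂ → ℂ) (x : ℂ) : ℝ :=
  -(2 * Real.pi)⁻¹ * Real.log (1 - ‖T x‖ ^ 2)
    + (2 * Real.pi)⁻¹ * Real.log ‖deriv T x‖

lemma robin_key (T : ℂ → ℂ) (x₀ : ℂ) (s : Set ℂ) (hs : IsOpen s) (hx : x₀ ∈ s)
    (hT : AnalyticOnNhd ℂ T s) (hT0 : T x₀ = 0)
    (hd1 : deriv T x₀ ≠ 0)
    (hDne : ∀ z ∈ s, deriv T z ≠ 0)
    (hslit : ∀ z ∈ s, (deriv T x₀)⁻¹ * deriv T z ∈ Complex.slitPlane)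
    (hNlt : ∀ z ∈ s, Complex.normSq (T z) < 1)
    (u : ℂ) :
    deriv (fun r : ℝ => robin T (x₀ + ↑r * u)) 0
      = (2*Real.pi)⁻¹ * (u * (deriv (deriv T) x₀ / deriv T x₀)).re
    ∧ deriv (deriv (fun r : ℝ => robin T (x₀ + ↑r * u))) 0
      = (2*Real.pi)⁻¹ * (2 * Complex.normSq (deriv T x₀) * Complex.normSq u
          + (u * (u * ((deriv (deriv (deriv T)) x₀ * deriv T x₀ - (deriv (deriv T) x₀)^2)
              / (deriv T x₀)^2))).re) := by
  set d1 : ℂ := deriv T x₀ with hd1def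
  set c : ℝ → ℂ := fun r => x₀ + ↑r * u with hcdef
  set I : Set ℝ := c ⁻¹' s with hIdef
  have hccont : Continuous c := by fun_prop
  have hIo : IsOpen I := hs.preimage hccont
  have hI0 : (0:ℝ) ∈ I := by simp [hIdef, hcdef, hx]
  have hc0 : c 0 = x₀ := by simp [hcdef]
  -- analytic families
  have hD1a : AnalyticOnNhd ℂ (deriv T) s := hT.deriv
  have hD2a : AnalyticOnNhd ℂ (deriv (deriv T)) s := hD1a.deriv
  -- derivative of c
  have hcd : ∀ r : ℝ, HasDerivAt c u r := by
    intro r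
    have h1 : HasDerivAt (fun t : ℝ => (t : ℂ)) 1 r := by
      simpa using (hasDerivAt_id r).ofReal_comp
    have := (h1.mul_const u).const_add x₀
    rw [one_mul] at this
    exact this
  -- building blocks
  set S : ℝ → ℂ := fun r => T (c r) with hSdef
  set A : ℝ → ℂ := fun r => u * deriv T (c r) with hAdef
  set N : ℝ → ℝ := fun r => Complex.normSq (S r) with hNdef
  set N1 : ℝ → ℝ := fun r => 2 * ((S r).re * (A r).re + (S r).im * (A r).im) with hN1def
  set L : ℂ → ℂ := fun z => Complex.log (d1⁻¹ * deriv T z) with hLdef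
  set l1 : ℂ → ℂ := fun z => deriv (deriv T) z / deriv T z with hl1def
  set Q : ℝ → ℝ := fun r => (L (c r)).re with hQdef
  set Q1 : ℝ → ℝ := fun r => (u * l1 (c r)).re with hQ1def
  set G1 : ℝ → ℝ := fun r => (2*Real.pi)⁻¹ * ((1 - N r)⁻¹ * N1 r + Q1 r) with hG1def
  -- the formula for robin on s
  have hform : ∀ z ∈ s, robin T z
      = (2*Real.pi)⁻¹ * (-(Real.log (1 - Complex.normSq (T z))) + (L z).re)
        + (2*Real.pi)⁻¹ * Real.log ‖d1‖ := by
    intro z hz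
    have hne : d1⁻¹ * deriv T z ≠ 0 := mul_ne_zero (inv_ne_zero hd1) (hDne z hz)
    have h1 : (L z).re = Real.log ‖d1⁻¹ * deriv T z‖ := by
      simp [hLdef, Complex.log_re]
    have h2 : Real.log ‖d1⁻¹ * deriv T z‖
        = Real.log ‖deriv T z‖ - Real.log ‖d1‖ := by
      rw [norm_mul, norm_inv, Real.log_mul (by simpa using hd1) (by simpa using hDne z hz),
        Real.log_inv]
      ring
    rw [robin, Complex.sq_norm, h1, h2]
    ring
  -- derivatives of the building blocks
  have hre : ∀ (F : ℝ → ℂ) (F' : ℂ) (r : ℝ), HasDerivAt F F' r →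
      HasDerivAt (fun t => (F t).re) F'.re r := fun F F' r hF => by
    exact Complex.reCLM.hasFDerivAt.comp_hasDerivAt r hF
  have him : ∀ (F : ℝ → ℂ) (F' : ℂ) (r : ℝ), HasDerivAt F F' r →
      HasDerivAt (fun t => (F t).im) F'.im r := fun F F' r hF => by
    exact Complex.imCLM.hasFDerivAt.comp_hasDerivAt r hF
  have hSd : ∀ r ∈ I, HasDerivAt S (A r) r := fun r hr => by
    have := HasDerivAt.scomp (𝕜 := ℝ) r ((hT (c r) hr).differentiableAt.hasDerivAt) (hcd r)
    simpa [hSdef, hAdef, smul_eq_mul, Function.comp_def] using this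
  have hAd : ∀ r ∈ I, HasDerivAt A (u * (u * deriv (deriv T) (c r))) r := fun r hr => by
    have := (HasDerivAt.scomp (𝕜 := ℝ) r
      ((hD1a (c r) hr).differentiableAt.hasDerivAt) (hcd r)).const_mul u
    simpa [hAdef, smul_eq_mul] using this
  have hNd : ∀ r ∈ I, HasDerivAt N (N1 r) r := fun r hr => by
    have h1 := hre _ _ _ (hSd r hr)
    have h2 := him _ _ _ (hSd r hr)
    have h3 := (h1.mul h1).add (h2.mul h2)
    have h4 : HasDerivAt N ((A r).re * (S r).re + (S r).re * (A r).re
        + ((A r).im * (S r).im + (S r).im * (A r).im)) r := by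
      simpa only [hNdef, Complex.normSq_apply, Pi.mul_def, Pi.add_def] using h3
    convert h4 using 1
    simp only [hN1def]; ring
  have hsub : ∀ r ∈ I, HasDerivAt (fun t => 1 - N t) (-(N1 r)) r := fun r hr => by
    simpa [Pi.sub_def] using (hasDerivAt_const r (1:ℝ)).sub (hNd r hr)
  have hsubne : ∀ r ∈ I, (1:ℝ) - N r ≠ 0 := fun r hr => by
    have := hNlt (c r) hr
    simp only [hNdef]
    intro h; simp only [hSdef] at h; nlinarith [this]
  have hPd : ∀ r ∈ I, HasDerivAt (fun t => Real.log (1 - N t)) (-((1 - N r)⁻¹ * N1 r)) r :=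
    fun r hr => by
    have := (Real.hasDerivAt_log (hsubne r hr)).comp r (hsub r hr)
    simpa [Function.comp_def, mul_comm] using this
  have hLd : ∀ z ∈ s, HasDerivAt L (l1 z) z := fun z hz => by
    have hinner : HasDerivAt (fun w => d1⁻¹ * deriv T w) (d1⁻¹ * deriv (deriv T) z) z :=
      ((hD1a z hz).differentiableAt.hasDerivAt).const_mul d1⁻¹
    have := hinner.clog (hslit z hz)
    convert this using 1
    rw [hl1def]
    field_simp
  have hQd : ∀ r ∈ I, HasDerivAt Q (Q1 r) r := fun r hr => by
    have h1 : HasDerivAt (fun t => L (c t)) (u * l1 (c r)) r := by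
      have := HasDerivAt.scomp (𝕜 := ℝ) r (hLd (c r) hr) (hcd r)
      simpa [smul_eq_mul, Function.comp_def] using this
    exact hre _ _ _ h1
  -- the derivative of the robin along the line
  have hGd : ∀ r ∈ I, HasDerivAt (fun t => robin T (c t)) (G1 r) r := fun r hr => by
    have hFd : HasDerivAt (fun t => (2*Real.pi)⁻¹ * (-(Real.log (1 - N t)) + Q t)
        + (2*Real.pi)⁻¹ * Real.log ‖d1‖) (G1 r) r := by
      have h5 := (((hPd r hr).neg).add (hQd r hr)).const_mul ((2*Real.pi)⁻¹)
      have h6 := h5.add_const ((2*Real.pi)⁻¹ * Real.log ‖d1‖)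
      exact h6.congr_deriv (by simp only [hG1def]; ring)
    apply hFd.congr_of_eventuallyEq
    filter_upwards [hIo.mem_nhds hr] with t ht
    exact hform (c t) ht
  -- values at 0
  have hS0 : S 0 = 0 := by rw [hSdef]; simp only; rw [hc0, hT0]
  have hN0 : N 0 = 0 := by rw [hNdef]; simp only; rw [hS0]; simp
  have hN10 : N1 0 = 0 := by rw [hN1def]; simp only; rw [hS0]; simp
  have hA0 : A 0 = u * d1 := by rw [hAdef]; simp only; rw [hc0]
  constructor
  · have hd0 : deriv (fun r : ℝ => robin T (x₀ + ↑r * u)) 0 = G1 0 := (hGd 0 hI0).deriv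
    rw [hd0, hG1def]
    simp only
    rw [hN10, hN0]
    simp [hQ1def, hl1def, hc0, hd1def]
  · have hdevev : deriv (fun t : ℝ => robin T (c t)) =ᶠ[𝓝 (0:ℝ)] G1 := by
      filter_upwards [hIo.mem_nhds hI0] with r hr
      exact (hGd r hr).deriv
    have heq2 : deriv (deriv (fun r : ℝ => robin T (x₀ + ↑r * u))) 0 = deriv G1 0 :=
      hdevev.deriv_eq
    rw [heq2]
    -- second derivative computation
    have hSre := hre _ _ _ (hSd 0 hI0)
    have hSim := him _ _ _ (hSd 0 hI0)
    have hAre := hre _ _ _ (hAd 0 hI0)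
    have hAim := him _ _ _ (hAd 0 hI0)
    have hN1d : HasDerivAt N1 (2 * ((A 0).re * (A 0).re + (A 0).im * (A 0).im)) 0 := by
      have h7 := ((hSre.mul hAre).add (hSim.mul hAim)).const_mul (2:ℝ)
      have h8 : HasDerivAt N1 (2 * ((A 0).re * (A 0).re + (S 0).re * (u * (u * deriv (deriv T) (c 0))).re
          + ((A 0).im * (A 0).im + (S 0).im * (u * (u * deriv (deriv T) (c 0))).im))) 0 := by
        simpa only [hN1def, mul_add, Pi.mul_def, Pi.add_def] using h7
      convert h8 using 1
      rw [hS0]; simp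
    have hinvd : HasDerivAt (fun t => (1 - N t)⁻¹) 0 0 := by
      have := (hsub 0 hI0).inv (hsubne 0 hI0)
      simpa [hN10, Pi.inv_def] using this
    have hprod : HasDerivAt (fun t => (1 - N t)⁻¹ * N1 t)
        (2 * ((A 0).re * (A 0).re + (A 0).im * (A 0).im)) 0 := by
      have := hinvd.mul hN1d
      simpa [hN10, hN0, Pi.mul_def] using this
    have hl1d : HasDerivAt l1
        ((deriv (deriv (deriv T)) x₀ * deriv T x₀ - deriv (deriv T) x₀ * deriv (deriv T) x₀)
          / (deriv T x₀) ^ 2) x₀ :=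
      ((hD2a x₀ hx).differentiableAt.hasDerivAt).div
        ((hD1a x₀ hx).differentiableAt.hasDerivAt) (hDne x₀ hx)
    have hQ1d : HasDerivAt Q1
        ((u * (u * ((deriv (deriv (deriv T)) x₀ * deriv T x₀ - deriv (deriv T) x₀ * deriv (deriv T) x₀)
          / (deriv T x₀) ^ 2))).re) 0 := by
      have h9 : HasDerivAt (fun t => l1 (c t))
          (u * ((deriv (deriv (deriv T)) x₀ * deriv T x₀ - deriv (deriv T) x₀ * deriv (deriv T) x₀)
            / (deriv T x₀) ^ 2)) 0 := by
        have := HasDerivAt.scomp_of_eq (𝕜 := ℝ) 0 hl1d (hcd 0) hc0.symm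
        simpa [smul_eq_mul, Function.comp_def] using this
      exact hre _ _ _ ((h9.const_mul u))
    have hG1d : HasDerivAt G1 ((2*Real.pi)⁻¹ * (2 * ((A 0).re * (A 0).re + (A 0).im * (A 0).im)
        + (u * (u * ((deriv (deriv (deriv T)) x₀ * deriv T x₀ - deriv (deriv T) x₀ * deriv (deriv T) x₀)
          / (deriv T x₀) ^ 2))).re)) 0 := (hprod.add hQ1d).const_mul _
    rw [hG1d.deriv]
    have hA0n : (A 0).re * (A 0).re + (A 0).im * (A 0).im = Complex.normSq d1 * Complex.normSq u := by
      rw [show (A 0).re * (A 0).re + (A 0).im * (A 0).im = Complex.normSq (A 0) from rfl, hA0,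
        Complex.normSq_mul]
      ring
    rw [hA0n]
    congr 2
    · ring
    · congr 2
      ring

/-- if the Robin function is invariant under the rotation of angle
`θ ∈ (0,2π) \\ {π}` around `x₀`, then `T''(x₀) = 0` and `T'''(x₀) = 0`. -/
theorem stmt17
    (Ω : Set ℂ) (hΩo : IsOpen Ω) (hΩb : Bornology.IsBounded Ω)
    (hΩc : IsConnected Ω) (hΩsc : SimplyConnectedSpace Ω)
    (x₀ : ℂ) (hx₀ : x₀ ∈ Ω)
    (T : ℂ → ℂ) (hTd : DifferentiableOn ℂ T Ω)
    (hTbij : Set.BijOn T Ω (Metric.ball 0 1))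
    (hT0 : T x₀ = 0)
    (θ : ℝ) (hθ : θ ∈ Set.Ioo 0 (2 * Real.pi)) (hθπ : θ ≠ Real.pi)
    (hrot : ∀ᶠ x in nhds x₀,
      robin T (x₀ + Complex.exp ((θ : ℂ) * Complex.I) * (x - x₀)) = robin T x) :
    iteratedDeriv 2 T x₀ = 0 ∧ iteratedDeriv 3 T x₀ = 0 := by
  obtain ⟨hθ0, hθ2π⟩ := hθ
  have hπ : (0:ℝ) < Real.pi := Real.pi_pos
  set d1 : ℂ := deriv T x₀ with hd1def
  have hd1 : d1 ≠ 0 := deriv_ne_zero_of_injOn hΩo hx₀ hTd hTbij.injOn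
  have hana : AnalyticOnNhd ℂ T Ω := hTd.analyticOnNhd hΩo
  have hD1c : ContinuousOn (fun z => d1⁻¹ * deriv T z) Ω :=
    continuousOn_const.mul hana.deriv.continuousOn
  set s : Set ℂ := Ω ∩ (fun z => d1⁻¹ * deriv T z) ⁻¹' (Metric.ball (1:ℂ) 1) with hsdef
  have hso : IsOpen s := hD1c.isOpen_inter_preimage hΩo Metric.isOpen_ball
  have hxs : x₀ ∈ s := by
    refine ⟨hx₀, ?_⟩
    simp only [Set.mem_preimage, ← hd1def, inv_mul_cancel₀ hd1]
    exact Metric.mem_ball_self one_pos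
  have hball : ∀ z ∈ s, ‖d1⁻¹ * deriv T z - 1‖ < 1 := by
    intro z hz
    have := hz.2
    simpa [Metric.mem_ball, Complex.dist_eq] using this
  have hdne : ∀ z ∈ s, deriv T z ≠ 0 := by
    intro z hz h0
    have := hball z hz
    rw [h0] at this
    simp at this
  have hslit : ∀ z ∈ s, d1⁻¹ * deriv T z ∈ Complex.slitPlane := by
    intro z hz
    rw [Complex.mem_slitPlane_iff]
    left
    have h1 := hball z hz
    have h2 := Complex.abs_re_le_norm (d1⁻¹ * deriv T z - 1)
    rw [Complex.sub_re, Complex.one_re] at h2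
    have := abs_lt.mp (lt_of_le_of_lt h2 h1)
    linarith [this.1]
  have hNlt : ∀ z ∈ s, Complex.normSq (T z) < 1 := by
    intro z hz
    have := hTbij.mapsTo hz.1
    rw [Metric.mem_ball, Complex.dist_eq, sub_zero] at this
    rw [Complex.normSq_eq_norm_sq]
    nlinarith [norm_nonneg (T z)]
  have hTs : AnalyticOnNhd ℂ T s := fun z hz => hana z hz.1
  have key := robin_key T x₀ s hso hxs hTs hT0 hd1 hdne hslit hNlt
  set ω : ℂ := Complex.exp ((θ:ℂ) * Complex.I) with hωdef
  -- basic facts about ω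
  have hω1 : ω ≠ 1 := by
    intro h
    obtain ⟨n, hn⟩ := Complex.exp_eq_one_iff.mp h
    have hIne := Complex.I_ne_zero
    have h3 : (θ:ℂ) = (n:ℂ) * (2 * Real.pi) := by
      apply mul_right_cancel₀ hIne
      linear_combination hn
    have h4 : θ = (n:ℝ) * (2 * Real.pi) := by exact_mod_cast h3
    have hn0 : (0:ℝ) < (n:ℝ) := by nlinarith
    have hn1 : (1:ℝ) ≤ (n:ℝ) := by exact_mod_cast (by exact_mod_cast hn0 : (0:ℤ) < n)
    nlinarith
  have hω2 : ω ^ 2 ≠ 1 := by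
    intro h
    rw [hωdef, ← Complex.exp_nat_mul] at h
    obtain ⟨n, hn⟩ := Complex.exp_eq_one_iff.mp h
    have hIne := Complex.I_ne_zero
    have h3 : (2:ℂ) * θ = (n:ℂ) * (2 * Real.pi) := by
      apply mul_right_cancel₀ hIne
      linear_combination hn
    have h4 : 2 * θ = (n:ℝ) * (2 * Real.pi) := by exact_mod_cast h3
    have hn0 : (0:ℝ) < (n:ℝ) := by nlinarith
    have hn2 : (n:ℝ) < 2 := by nlinarith
    have hn1 : n = 1 := by
      have ha : (0:ℤ) < n := by exact_mod_cast hn0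
      have hb : (n:ℤ) < 2 := by exact_mod_cast hn2
      omega
    rw [hn1] at h4
    simp at h4
    exact hθπ (by linarith)
  have hnsω : Complex.normSq ω = 1 := by
    rw [Complex.normSq_eq_norm_sq, hωdef, Complex.norm_exp]
    simp
  -- rotation invariance along lines
  have hrotu : ∀ u : ℂ, (fun r : ℝ => robin T (x₀ + ↑r * (ω * u)))
      =ᶠ[𝓝 (0:ℝ)] (fun r : ℝ => robin T (x₀ + ↑r * u)) := by
    intro u
    have hcont : Continuous (fun r : ℝ => x₀ + ↑r * u) := by fun_prop
    have hct : Filter.Tendsto (fun r : ℝ => x₀ + ↑r * u) (𝓝 0) (𝓝 x₀) := by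
      have := hcont.tendsto 0
      simpa using this
    filter_upwards [hct.eventually hrot] with r hr
    have e : x₀ + (r:ℂ) * (ω * u) = x₀ + ω * ((x₀ + ↑r * u) - x₀) := by ring
    rw [e]
    exact hr
  have h2πne : ((2*Real.pi)⁻¹ : ℝ) ≠ 0 := by positivity
  -- first-order consequence
  set z1 : ℂ := deriv (deriv T) x₀ / deriv T x₀ with hz1def
  have Eq1 : ∀ u : ℂ, (ω * u * z1).re = (u * z1).re := by
    intro u
    have h := (hrotu u).deriv_eq
    rw [(key (ω * u)).1, (key u).1] at h
    exact mul_left_cancel₀ h2πne h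
  set z2 : ℂ := (deriv (deriv (deriv T)) x₀ * deriv T x₀ - (deriv (deriv T) x₀)^2)
      / (deriv T x₀)^2 with hz2def
  have Eq2 : ∀ u : ℂ, (ω * u * (ω * u * z2)).re = (u * (u * z2)).re := by
    intro u
    have h := ((hrotu u).deriv).deriv_eq
    rw [(key (ω * u)).2, (key u).2] at h
    have h2 := mul_left_cancel₀ h2πne h
    rw [Complex.normSq_mul, hnsω, one_mul] at h2
    exact add_left_cancel h2
  -- deduce z1 = 0
  have hz1 : z1 = 0 := by
    have hre : ((ω - 1) * z1).re = 0 := by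
      have h := Eq1 1
      have e2 : ((ω - 1) * z1) = ω * 1 * z1 - 1 * z1 := by ring
      have e4 := congrArg Complex.re e2
      rw [Complex.sub_re, h, sub_self] at e4
      exact e4
    have him : ((ω - 1) * z1).im = 0 := by
      have h := Eq1 Complex.I
      have e2 : ((ω - 1) * z1 * Complex.I) = ω * Complex.I * z1 - Complex.I * z1 := by ring
      have e4 := congrArg Complex.re e2
      rw [Complex.sub_re, h, sub_self] at e4
      have e6 : ((ω - 1) * z1).im = -(((ω - 1) * z1 * Complex.I).re) := by
        simp [Complex.mul_I_re]
      rw [e6, e4, neg_zero]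
    have hw : (ω - 1) * z1 = 0 := Complex.ext hre him
    rcases mul_eq_zero.mp hw with h | h
    · exact absurd (by linear_combination h) hω1
    · exact h
  have hD2 : deriv (deriv T) x₀ = 0 := by
    rw [hz1def, div_eq_zero_iff] at hz1
    exact hz1.resolve_right hd1
  -- deduce z2 = 0
  have hz2 : z2 = 0 := by
    have hre : ((ω^2 - 1) * z2).re = 0 := by
      have h := Eq2 1
      have e2 : ((ω^2 - 1) * z2) = ω * 1 * (ω * 1 * z2) - 1 * (1 * z2) := by ring
      have e4 := congrArg Complex.re e2
      rw [Complex.sub_re, h, sub_self] at e4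
      exact e4
    have him : ((ω^2 - 1) * z2).im = 0 := by
      have h := Eq2 (1 + Complex.I)
      have e2 : ((ω^2 - 1) * z2 * Complex.I) + ((ω^2 - 1) * z2 * Complex.I)
          = ω * (1+Complex.I) * (ω * (1+Complex.I) * z2)
            - (1+Complex.I) * ((1+Complex.I) * z2) := by
        linear_combination (-(ω^2-1) * z2) * Complex.I_sq
      have e4 := congrArg Complex.re e2
      rw [Complex.add_re, Complex.sub_re, h, sub_self] at e4
      have e5 : ((ω^2 - 1) * z2 * Complex.I).re = 0 := by linarith
      have e6 : ((ω^2 - 1) * z2).im = -(((ω^2 - 1) * z2 * Complex.I).re) := by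
        simp [Complex.mul_I_re]
      rw [e6, e5, neg_zero]
    have hw : (ω^2 - 1) * z2 = 0 := Complex.ext hre him
    rcases mul_eq_zero.mp hw with h | h
    · exact absurd (by linear_combination h) hω2
    · exact h
  have hD3 : deriv (deriv (deriv T)) x₀ = 0 := by
    rw [hz2def, div_eq_zero_iff] at hz2
    have := hz2.resolve_right (pow_ne_zero 2 hd1)
    rw [hD2] at this
    have h5 : deriv (deriv (deriv T)) x₀ * deriv T x₀ = 0 := by linear_combination this
    rcases mul_eq_zero.mp h5 with h | h
    · exact h
    · exact absurd h hd1
  constructor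
  · rw [show (2:ℕ) = 1 + 1 from rfl, iteratedDeriv_succ, iteratedDeriv_succ, iteratedDeriv_zero]
    exact hD2
  · rw [show (3:ℕ) = 2 + 1 from rfl, iteratedDeriv_succ, show (2:ℕ) = 1 + 1 from rfl,
      iteratedDeriv_succ, iteratedDeriv_succ, iteratedDeriv_zero]
    exact hD3
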